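/- Let p be a prime. For every continuous function f : ℤ_p → ℚ_p there exists a unique sequence a : ℕ → ℚ_p with a_n → 0 as n → ∞ such that for every x ∈ ℤ_p the series Σ_{n=0}^∞ a_n · C_n(x) converges to f(x). Moreover, sup_{x ∈ ℤ_p} ‖f(x)‖_p = sup_{n ∈ ℕ} ‖a_n‖_p (both suprema are finite and equal). In other words, the binomial coefficient functions (C_n)_{n∈ℕ} form an orthonormal basis of the ℚ_p-Banach space of continuous functions ℤ_p → ℚ_p with the supremum norm. -/

import Mathlib

open Filter
open scoped fwdDiff

namespace Stmt1

variable (p : ℕ) [Fact p.Prime]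

/-- The binomial coefficient function `C_n : ℤ_p → ℚ_p`,
`C_n(x) = x (x - 1) ⋯ (x - n + 1) / n!`. -/
noncomputable def binC (n : ℕ) (x : ℤ_[p]) : ℚ_[p] :=
  (∏ i ∈ Finset.range n, ((x : ℚ_[p]) - (i : ℚ_[p]))) / (n.factorial : ℚ_[p])

lemma descPochhammer_eval_prod {R : Type*} [CommRing R] (n : ℕ) (y : R) :
    (descPochhammer R n).eval y = ∏ i ∈ Finset.range n, (y - (i : R)) := by
  induction n with
  | zero => simp
  | succ n ih =>
      rw [descPochhammer_succ_right, Polynomial.eval_mul, ih, Finset.prod_range_succ]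
      simp

lemma binC_eq_mahler (n : ℕ) (x : ℤ_[p]) : binC p n x = mahler n x := by
  have h : (descPochhammer ℤ_[p] n).eval x = n.factorial • Ring.choose x n := by
    have := Ring.descPochhammer_eq_factorial_smul_choose (R := ℤ_[p]) x n
    rwa [← Polynomial.aeval_eq_smeval (R := ℤ) x, Polynomial.aeval_def,
      ← Polynomial.eval_map, descPochhammer_map] at this
  have h3 : (∏ i ∈ Finset.range n, ((x : ℚ_[p]) - (i : ℚ_[p])))
      = (n.factorial : ℚ_[p]) * ((Ring.choose x n : ℤ_[p]) : ℚ_[p]) := by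
    have h4 : ((∏ i ∈ Finset.range n, (x - (i : ℤ_[p])) : ℤ_[p]) : ℚ_[p])
        = ∏ i ∈ Finset.range n, ((x : ℚ_[p]) - (i : ℚ_[p])) := by
      norm_cast
      exact map_prod (PadicInt.Coe.ringHom (p := p)) _ _
    rw [← h4, ← descPochhammer_eval_prod, h]
    push_cast [nsmul_eq_mul]
    ring
  rw [binC, h3, mahler_apply, mul_div_cancel_left₀]
  exact_mod_cast n.factorial_ne_zero

instance : IsBoundedSMul ℤ_[p] ℚ_[p] :=
  IsBoundedSMul.of_norm_smul_le fun r x => by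
    rw [Algebra.smul_def, PadicInt.algebraMap_apply, norm_mul, PadicInt.norm_def]

/-- **Mahler's theorem.** Every continuous `f : ℤ_p → ℚ_p` has a unique expansion
`f(x) = Σ_n a_n C_n(x)` with `a_n → 0`, and `sup_x ‖f x‖ = sup_n ‖a n‖` (both suprema being
finite): the binomial coefficient functions form an orthonormal basis of `C(ℤ_p, ℚ_p)`. -/
theorem mahler (f : ℤ_[p] → ℚ_[p]) (hf : Continuous f) :
    ∃ a : ℕ → ℚ_[p],
      (Tendsto a atTop (nhds 0) ∧
        ∀ x : ℤ_[p], HasSum (fun n : ℕ => a n * binC p n x) (f x)) ∧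
      (∀ b : ℕ → ℚ_[p],
        (Tendsto b atTop (nhds 0) ∧
          ∀ x : ℤ_[p], HasSum (fun n : ℕ => b n * binC p n x) (f x)) → b = a) ∧
      BddAbove (Set.range fun x : ℤ_[p] => ‖f x‖) ∧
      BddAbove (Set.range fun n : ℕ => ‖a n‖) ∧
      (⨆ x : ℤ_[p], ‖f x‖) = ⨆ n : ℕ, ‖a n‖ := by
  classical
  set F : C(ℤ_[p], ℚ_[p]) := ⟨f, hf⟩ with hF
  set a : ℕ → ℚ_[p] := fun n => (fwdDiff (1 : ℤ_[p]))^[n] (⇑F) 0 with ha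
  have hta : Tendsto a atTop (nhds 0) := PadicInt.fwdDiff_tendsto_zero F
  have hsum : ∀ x : ℤ_[p], HasSum (fun n : ℕ => a n * binC p n x) (f x) := by
    intro x
    have := ContinuousMap.hasSum_apply (PadicInt.hasSum_mahler F) x
    convert this using 2 with n
    · rfl
    rw [PadicInt.mahlerTerm_apply, Algebra.smul_def, PadicInt.algebraMap_apply, binC_eq_mahler,
      mul_comm]
    · rfl
  refine ⟨a, ⟨hta, hsum⟩, ?_, ?_, ?_, ?_⟩
  · rintro b ⟨htb, hsb⟩
    have hms : PadicInt.mahlerSeries b = F := by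
      ext x
      rw [PadicInt.mahlerSeries_apply htb x]
      have : HasSum (fun n : ℕ => _root_.mahler n x • b n) (f x) := by
        convert hsb x using 2 with n
        rw [Algebra.smul_def, PadicInt.algebraMap_apply, binC_eq_mahler, mul_comm]
      exact this.tsum_eq
    funext n
    rw [ha, ← hms]
    exact (PadicInt.fwdDiff_mahlerSeries htb n).symm
  · exact (isCompact_range hf.norm).bddAbove
  · refine ⟨‖F‖, ?_⟩
    rintro y ⟨n, rfl⟩
    exact IsUltrametricDist.norm_fwdDiff_iter_apply_le 1 F 0 n
  · have h1 : (⨆ x : ℤ_[p], ‖f x‖) = ‖F‖ := (F.norm_eq_iSup_norm).symm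
    have h2 : ‖F‖ = ‖PadicInt.mahlerEquiv ℚ_[p] F‖ := ((PadicInt.mahlerEquiv ℚ_[p]).norm_map F).symm
    have h3 : ‖PadicInt.mahlerEquiv ℚ_[p] F‖ = ⨆ n : ℕ, ‖a n‖ := by
      rw [← ZeroAtInftyContinuousMap.norm_toBCF_eq_norm,
        BoundedContinuousFunction.norm_eq_iSup_norm]
      rfl
    rw [h1, h2, h3]

end Stmt1
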